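/- Suppose for every i ∈ N (a subset of the n players) the structural inequality α(σ(i))·v(i) + α(ν(i))·b(π^i(ν(i))) ≥ γ·α(ν(i))·v(i) holds, where b(j) ≤ v(j) for ALL players j (including those outside N), σ is the GSP assignment under b, π = σ⁻¹, π^i is the GSP assignment with i removed, and ν maximizes Σ_{i∈N} α(ν(i))·v(i) over permutations. Then 2·Σ_{j=1}^n α(σ(j))·v(j) ≥ γ·Σ_{i∈N} α(ν(i))·v(i). -/

import Mathlib

theorem structural_implies_welfare_byzantine (γ : ℝ) (hγ0 : 0 < γ) (hγ1 : γ ≤ 1)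
    (n : ℕ) (N : Finset (Fin n)) (α v b : Fin n → ℝ)
    (hα : Antitone α) (hα0 : ∀ k, 0 ≤ α k)
    (hv0 : ∀ i, 0 ≤ v i) (hb0 : ∀ i, 0 ≤ b i)
    (σ ν : Equiv.Perm (Fin n))
    -- σ is the GSP assignment: the player in slot k, namely σ⁻¹(k), has the k-th highest bid
    (hσsort : ∀ k l : Fin n, k ≤ l → b (σ.symm l) ≤ b (σ.symm k))
    -- ν maximizes the welfare of the rational players N over permutations
    (hν : ∀ τ : Equiv.Perm (Fin n),
      ∑ i ∈ N, α (τ i) * v i ≤ ∑ i ∈ N, α (ν i) * v i)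
    -- no player (rational or byzantine) ever bids above value
    (hbv : ∀ j, b j ≤ v j)
    -- πi i k : player occupying slot k when i's bid is removed (greedy assignment)
    (πi : Fin n → Fin n → Fin n)
    (hπi : ∀ i k, b (πi i k) ≤ b (σ.symm k))
    -- structural property holds for rational players
    (hstruct : ∀ i ∈ N, α (σ i) * v i + α (ν i) * b (πi i (ν i)) ≥ γ * α (ν i) * v i) :
    2 * ∑ j, α (σ j) * v j ≥ γ * ∑ i ∈ N, α (ν i) * v i := by
  have h1 : ∑ i ∈ N, α (σ i) * v i ≤ ∑ j, α (σ j) * v j :=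
    Finset.sum_le_sum_of_subset_of_nonneg (Finset.subset_univ N)
      (fun i _ _ => mul_nonneg (hα0 _) (hv0 _))
  have h2 : ∑ i ∈ N, α (ν i) * b (πi i (ν i)) ≤ ∑ j, α (σ j) * v j := by
    calc ∑ i ∈ N, α (ν i) * b (πi i (ν i))
        ≤ ∑ i ∈ N, α (ν i) * b (σ.symm (ν i)) :=
          Finset.sum_le_sum fun i _ =>
            mul_le_mul_of_nonneg_left (hπi i (ν i)) (hα0 _)
      _ ≤ ∑ i, α (ν i) * b (σ.symm (ν i)) :=
          Finset.sum_le_sum_of_subset_of_nonneg (Finset.subset_univ N)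
            (fun i _ _ => mul_nonneg (hα0 _) (hb0 _))
      _ = ∑ k, α k * b (σ.symm k) := Equiv.sum_comp ν (fun k => α k * b (σ.symm k))
      _ = ∑ j, α (σ j) * b j := by
          rw [← Equiv.sum_comp σ (fun k => α k * b (σ.symm k))]
          simp
      _ ≤ ∑ j, α (σ j) * v j :=
          Finset.sum_le_sum fun j _ => mul_le_mul_of_nonneg_left (hbv j) (hα0 _)
  have hs : γ * ∑ i ∈ N, α (ν i) * v i ≤
      ∑ i ∈ N, (α (σ i) * v i + α (ν i) * b (πi i (ν i))) := by
    rw [Finset.mul_sum]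
    refine Finset.sum_le_sum fun i hi => ?_
    have := hstruct i hi
    linarith [this]
  rw [Finset.sum_add_distrib] at hs
  linarith
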